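/- Let G be a topological group, N a normal subgroup of G and H a subgroup of G such that the multiplication map N × H → G, (n, h) ↦ n·h, is a homeomorphism (where N and H carry the subspace topologies and N × H the product topology). Let Γ'' ≤ N and Γ' ≤ H be subgroups such that: Γ'' is discrete in G and there is a compact set K_N ⊆ N with K_N·Γ'' = N; Γ' is discrete in G and there is a compact set K_H ⊆ H with K_H·Γ' = H; and γ'·γ''·γ'⁻¹ ∈ Γ'' for all γ' ∈ Γ', γ'' ∈ Γ''. Then Γ = {γ''·γ' : γ'' ∈ Γ'', γ' ∈ Γ'} is a subgroup of G, Γ is discrete in G, and there exists a compact set K ⊆ G with K·Γ = G. -/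

import Mathlib

open scoped Pointwise


/-- Semidirect-product lattice construction: if `G = N ⋊ H` topologically (the
multiplication map `N × H → G` is a homeomorphism, `N` normal), `Γ'' ≤ N` and `Γ' ≤ H` are
discrete cocompact subgroups of `N` resp. `H`, and conjugation by `Γ'` preserves `Γ''`,
then `Γ''·Γ'` is a discrete cocompact subgroup (lattice) of `G`. -/
theorem stmt_10 {G : Type*} [Group G] [TopologicalSpace G] [IsTopologicalGroup G]
    (N H : Subgroup G) (hN : N.Normal)
    (hhomeo : IsHomeomorph (fun p : N × H => (p.1 : G) * (p.2 : G)))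
    (Γ'' Γ' : Subgroup G) (hΓ''N : Γ'' ≤ N) (hΓ'H : Γ' ≤ H)
    (hΓ''disc : DiscreteTopology Γ'')
    (hΓ''cocpt : ∃ K : Set G, K ⊆ (N : Set G) ∧ IsCompact K ∧
      ∀ x ∈ N, ∃ k ∈ K, ∃ γ ∈ Γ'', x = k * γ)
    (hΓ'disc : DiscreteTopology Γ')
    (hΓ'cocpt : ∃ K : Set G, K ⊆ (H : Set G) ∧ IsCompact K ∧
      ∀ x ∈ H, ∃ k ∈ K, ∃ γ ∈ Γ', x = k * γ)
    (hconj : ∀ γ' ∈ Γ', ∀ γ'' ∈ Γ'', γ' * γ'' * γ'⁻¹ ∈ Γ'') :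
    ∃ Γ : Subgroup G,
      (Γ : Set G) = {g : G | ∃ γ'' ∈ Γ'', ∃ γ' ∈ Γ', g = γ'' * γ'} ∧
      DiscreteTopology Γ ∧
      ∃ K : Set G, IsCompact K ∧ ∀ g : G, ∃ k ∈ K, ∃ γ ∈ Γ, g = k * γ := by
  obtain ⟨KN, hKNsub, hKNcpt, hKNcov⟩ := hΓ''cocpt
  obtain ⟨KH, hKHsub, hKHcpt, hKHcov⟩ := hΓ'cocpt
  set Γ : Subgroup G :=
    { carrier := {g : G | ∃ γ'' ∈ Γ'', ∃ γ' ∈ Γ', g = γ'' * γ'}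
      one_mem' := ⟨1, Γ''.one_mem, 1, Γ'.one_mem, by simp⟩
      mul_mem' := by
        rintro a b ⟨x'', hx'', x', hx', rfl⟩ ⟨y'', hy'', y', hy', rfl⟩
        exact ⟨x'' * (x' * y'' * x'⁻¹), Γ''.mul_mem hx'' (hconj _ hx' _ hy''),
          x' * y', Γ'.mul_mem hx' hy', by group⟩
      inv_mem' := by
        rintro a ⟨x'', hx'', x', hx', rfl⟩
        exact ⟨x'⁻¹ * x''⁻¹ * x'⁻¹⁻¹, hconj _ (Γ'.inv_mem hx') _ (Γ''.inv_mem hx''),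
          x'⁻¹, Γ'.inv_mem hx', by group⟩ } with hΓdef
  have hmem : ∀ g : G, g ∈ Γ ↔ ∃ γ'' ∈ Γ'', ∃ γ' ∈ Γ', g = γ'' * γ' := fun g => Iff.rfl
  refine ⟨Γ, rfl, ?_, ?_⟩
  · -- discreteness
    rw [discreteTopology_iff_isOpen_singleton]
    rintro ⟨g, hg⟩
    obtain ⟨γ'', hγ'', γ', hγ', rfl⟩ := hg
    -- get isolating open sets for γ'' and γ'
    have h1 : IsOpen ({(⟨γ'', hγ''⟩ : Γ'')} : Set Γ'') := isOpen_discrete _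
    have h2 : IsOpen ({(⟨γ', hγ'⟩ : Γ')} : Set Γ') := isOpen_discrete _
    obtain ⟨U'', hU''open, hU''⟩ := isOpen_induced_iff.mp h1
    obtain ⟨U', hU'open, hU'⟩ := isOpen_induced_iff.mp h2
    have hU''iff : ∀ y ∈ Γ'', (y ∈ U'' ↔ y = γ'') := by
      intro y hy
      have := Set.ext_iff.mp hU'' ⟨y, hy⟩
      simpa using this
    have hU'iff : ∀ y ∈ Γ', (y ∈ U' ↔ y = γ') := by
      intro y hy
      have := Set.ext_iff.mp hU' ⟨y, hy⟩
      simpa using this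
    set W : Set (N × H) := {p | (p.1 : G) ∈ U'' ∧ (p.2 : G) ∈ U'} with hWdef
    have hWopen : IsOpen W := by
      have : W = ((fun p : N × H => (p.1 : G)) ⁻¹' U'') ∩
          ((fun p : N × H => (p.2 : G)) ⁻¹' U') := rfl
      rw [this]
      exact ((hU''open.preimage (continuous_subtype_val.comp continuous_fst)).inter
        (hU'open.preimage (continuous_subtype_val.comp continuous_snd)))
    set V : Set G := (fun p : N × H => (p.1 : G) * (p.2 : G)) '' W with hVdef
    have hVopen : IsOpen V := hhomeo.isOpenMap _ hWopen
    rw [isOpen_induced_iff]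
    refine ⟨V, hVopen, ?_⟩
    ext ⟨x, hx⟩
    simp only [Set.mem_preimage, Set.mem_singleton_iff, Subtype.mk.injEq]
    constructor
    · intro hxV
      obtain ⟨p, hpW, hpx⟩ := hxV
      obtain ⟨δ'', hδ'', δ', hδ', rfl⟩ := hx
      have hinj := hhomeo.bijective.1 (a₁ := p)
        (a₂ := (⟨⟨δ'', hΓ''N hδ''⟩, ⟨δ', hΓ'H hδ'⟩⟩ : N × H)) (by simpa using hpx)
      have h1' : (p.1 : G) = δ'' := by rw [hinj]
      have h2' : (p.2 : G) = δ' := by rw [hinj]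
      have hd1 : δ'' = γ'' := (hU''iff δ'' hδ'').mp (h1' ▸ hpW.1)
      have hd2 : δ' = γ' := (hU'iff δ' hδ').mp (h2' ▸ hpW.2)
      rw [hd1, hd2]
    · rintro rfl
      refine ⟨(⟨⟨γ'', hΓ''N hγ''⟩, ⟨γ', hΓ'H hγ'⟩⟩ : N × H), ?_, rfl⟩
      exact ⟨(hU''iff γ'' hγ'').mpr rfl, (hU'iff γ' hγ').mpr rfl⟩
  · -- cocompactness
    refine ⟨KH * KN, hKHcpt.mul hKNcpt, ?_⟩
    intro g
    obtain ⟨p, hp⟩ := hhomeo.bijective.2 g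
    obtain ⟨k, hk, γ', hγ', hph⟩ := hKHcov (p.2 : G) p.2.2
    have hkH : k ∈ H := hKHsub hk
    have hmN : k⁻¹ * (p.1 : G) * k ∈ N := by
      have := hN.conj_mem (p.1 : G) p.1.2 k⁻¹
      simpa using this
    obtain ⟨kN, hkN, γ'', hγ'', hmn⟩ := hKNcov _ hmN
    refine ⟨k * kN, Set.mul_mem_mul hk hkN, γ'' * γ', ⟨γ'', hγ'', γ', hγ', rfl⟩, ?_⟩
    rw [← hp]
    simp only
    rw [hph]
    have : (kN : G) * γ'' = k⁻¹ * (p.1 : G) * k := hmn.symm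
    calc (p.1 : G) * (k * γ') = k * (k⁻¹ * (p.1 : G) * k) * γ' := by group
      _ = k * (kN * γ'') * γ' := by rw [← hmn]
      _ = k * kN * (γ'' * γ') := by group
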